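/- Let k ≥ 1 and s ≥ 1 be integers with k dividing s. Let H be a finite simple graph on a vertex set of size s in which every vertex has degree at most k − 1, and let w assign a nonnegative real weight to each vertex. Then there exists an independent set I of H with |I| = s/k such that k · Σ_{i∈I} w(i) ≤ Σ_{v ∈ V(H)} w(v). -/

import Mathlib

open Finset

lemma aux_greedy {V : Type*} [Fintype V] [DecidableEq V]
    (H : SimpleGraph V) [DecidableRel H.Adj] (k : ℕ) (hk : 1 ≤ k)
    (hdeg : ∀ v : V, H.degree v ≤ k - 1)
    (w : V → ℝ) (hw : ∀ v : V, 0 ≤ w v) :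
    ∀ n : ℕ, ∀ A : Finset V, n * k ≤ A.card →
      ∃ I : Finset V, I ⊆ A ∧ (∀ i ∈ I, ∀ j ∈ I, i ≠ j → ¬ H.Adj i j) ∧
        I.card = n ∧ (k : ℝ) * ∑ i ∈ I, w i ≤ ∑ v ∈ A, w v := by
  intro n
  induction n with
  | zero =>
    intro A _
    exact ⟨∅, by simp, by simp, by simp,
      by simpa using Finset.sum_nonneg (fun v _ => hw v)⟩
  | succ n ih =>
    intro A hA
    rw [Nat.succ_mul] at hA
    have hAne : A.Nonempty := by
      rw [← Finset.card_pos]; omega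
    obtain ⟨v, hvA, hvmin⟩ := A.exists_min_image w hAne
    set block := A ∩ insert v (H.neighborFinset v) with hblock
    have hvb : v ∈ block := by simp [hblock, hvA]
    have hbsub : block ⊆ A := Finset.inter_subset_left
    have hbcard : block.card ≤ k := by
      calc block.card ≤ (insert v (H.neighborFinset v)).card :=
            Finset.card_le_card Finset.inter_subset_right
        _ ≤ (H.neighborFinset v).card + 1 := Finset.card_insert_le _ _
        _ = H.degree v + 1 := by rw [SimpleGraph.card_neighborFinset_eq_degree]
        _ ≤ k := by have := hdeg v; omega
    have hsd : (A \ block).card = A.card - block.card := Finset.card_sdiff_of_subset hbsub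
    have hcard' : k - block.card ≤ (A \ block).card := by omega
    obtain ⟨E, hEsub, hEcard⟩ := Finset.exists_subset_card_eq hcard'
    have hA'card : n * k ≤ ((A \ block) \ E).card := by
      have h1 : ((A \ block) \ E).card = (A \ block).card - E.card :=
        Finset.card_sdiff_of_subset hEsub
      omega
    obtain ⟨I', hI'sub, hI'ind, hI'card, hI'w⟩ := ih _ hA'card
    have hI'A : I' ⊆ A \ block := hI'sub.trans Finset.sdiff_subset
    have hvI' : v ∉ I' := fun h => (Finset.mem_sdiff.mp (hI'A h)).2 hvb
    have hnadj : ∀ i ∈ I', ¬ H.Adj v i := by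
      intro i hi hadj
      have hiA : i ∈ A := (Finset.mem_sdiff.mp (hI'A hi)).1
      exact (Finset.mem_sdiff.mp (hI'A hi)).2 <| by
        simp [hblock, hiA, SimpleGraph.mem_neighborFinset, hadj]
    refine ⟨insert v I', ?_, ?_, ?_, ?_⟩
    · intro x hx
      rcases Finset.mem_insert.mp hx with rfl | hx
      · exact hvA
      · exact (Finset.mem_sdiff.mp (hI'A hx)).1
    · intro i hi j hj hij hadj
      rcases Finset.mem_insert.mp hi with rfl | hi2
      · rcases Finset.mem_insert.mp hj with rfl | hj2
        · exact hij rfl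
        · exact hnadj j hj2 hadj
      · rcases Finset.mem_insert.mp hj with rfl | hj2
        · exact hnadj i hi2 hadj.symm
        · exact hI'ind i hi2 j hj2 hij hadj
    · rw [Finset.card_insert_of_notMem hvI', hI'card]
    · -- weight bound
      have hEA : ∀ i ∈ E, i ∈ A := fun i hi => (Finset.mem_sdiff.mp (hEsub hi)).1
      have hblockw : (block.card : ℝ) * w v ≤ ∑ i ∈ block, w i := by
        have := Finset.card_nsmul_le_sum block w (w v)
          (fun i hi => hvmin i (hbsub hi))
        simpa [nsmul_eq_mul] using this
      have hEw : (E.card : ℝ) * w v ≤ ∑ i ∈ E, w i := by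
        have := Finset.card_nsmul_le_sum E w (w v) (fun i hi => hvmin i (hEA i hi))
        simpa [nsmul_eq_mul] using this
      have hsplit1 : ∑ i ∈ A, w i = ∑ i ∈ block, w i + ∑ i ∈ A \ block, w i := by
        rw [add_comm, Finset.sum_sdiff hbsub]
      have hsplit2 : ∑ i ∈ A \ block, w i
          = ∑ i ∈ E, w i + ∑ i ∈ (A \ block) \ E, w i := by
        rw [add_comm, Finset.sum_sdiff hEsub]
      have hkc : (k : ℝ) = (block.card : ℝ) + (E.card : ℝ) := by
        have : block.card + E.card = k := by omega
        push_cast [← this]; ring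
      have key : (k : ℝ) * w v ≤ ∑ i ∈ block, w i + ∑ i ∈ E, w i := by
        rw [hkc, add_mul]; linarith
      rw [Finset.sum_insert hvI', mul_add, hsplit1, hsplit2]
      linarith

/-- In a graph `H` on `s` vertices with maximum degree at most `k - 1` and nonnegative
vertex weights `w`, where `k ∣ s`, there is an independent set `I` of exactly `s / k`
vertices whose total weight is at most a `1/k` fraction of the total weight. -/
theorem exists_independent_set_small_weight {V : Type*} [Fintype V] [DecidableEq V]
    (H : SimpleGraph V) [DecidableRel H.Adj] (k s : ℕ) (hk : 1 ≤ k) (hs : 1 ≤ s)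
    (hcard : Fintype.card V = s) (hdvd : k ∣ s)
    (hdeg : ∀ v : V, H.degree v ≤ k - 1)
    (w : V → ℝ) (hw : ∀ v : V, 0 ≤ w v) :
    ∃ I : Finset V, (∀ i ∈ I, ∀ j ∈ I, i ≠ j → ¬ H.Adj i j) ∧ I.card = s / k ∧
      (k : ℝ) * ∑ i ∈ I, w i ≤ ∑ v : V, w v := by
  have h : (s / k) * k ≤ (Finset.univ : Finset V).card := by
    rw [Finset.card_univ, hcard, Nat.div_mul_cancel hdvd]
  obtain ⟨I, _, hind, hcardI, hwI⟩ := aux_greedy H k hk hdeg w hw (s / k) Finset.univ h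
  exact ⟨I, hind, hcardI, hwI⟩
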